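/- Embedding of λ•→ into Nakano's system λNak: if tree(Γ) ⊢ e : tree(T) is derivable in λ•→ without using the rule (const), then Γ ⊢ e : T is derivable in λNak. -/

import Mathlib

namespace LambdaBullet

/-- Head constructors for pseudo-types. -/
inductive TyHead : Type
  | var (n : ℕ)
  | nat
  | prod
  | arrow
  | bullet

/-- Arity of each pseudo-type constructor. -/
def tyArity : TyHead → Type
  | .var _ => Empty
  | .nat => Empty
  | .prod => Bool
  | .arrow => Bool
  | .bullet => Unit

/-- The polynomial functor whose M-type is the type of pseudo-types. -/
def TyP : PFunctor := ⟨TyHead, tyArity⟩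

/-- Pseudo-types: possibly infinite coinductively generated trees. -/
abbrev PseudoType := TyP.M

/-- Type variable. -/
def tvar (n : ℕ) : PseudoType := PFunctor.M.mk ⟨TyHead.var n, Empty.elim⟩
/-- The type `Nat`. -/
def tnat : PseudoType := PFunctor.M.mk ⟨TyHead.nat, Empty.elim⟩
/-- Product type. -/
def tprod (t s : PseudoType) : PseudoType :=
  PFunctor.M.mk ⟨TyHead.prod, fun b => bif b then s else t⟩
/-- Arrow type. -/
def tarrow (t s : PseudoType) : PseudoType :=
  PFunctor.M.mk ⟨TyHead.arrow, fun b => bif b then s else t⟩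
/-- Delay type `•t`. -/
def tbullet (t : PseudoType) : PseudoType :=
  PFunctor.M.mk ⟨TyHead.bullet, fun _ => t⟩
/-- Iterated delay `•ⁿ t`. -/
def tbulletN (n : ℕ) (t : PseudoType) : PseudoType := tbullet^[n] t

/-- `Child t s` holds iff `s` is an immediate subtree of `t`. -/
def Child (t s : PseudoType) : Prop := ∃ b : TyP.B t.dest.1, t.dest.2 b = s

/-- `Subtree t s` holds iff `s` is a subtree of `t`. -/
def Subtree (t s : PseudoType) : Prop := Relation.ReflTransGen Child t s

/-- A pseudo-type is regular if it has finitely many distinct subtrees. -/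
def Regular (t : PseudoType) : Prop := {s | Subtree t s}.Finite

/-- The root of the tree is a `•`. -/
def headIsBullet (t : PseudoType) : Prop := t.dest.1 = TyHead.bullet

/-- A pseudo-type is guarded if every infinite path in its tree has
infinitely many `•`'s. -/
def Guarded (t : PseudoType) : Prop :=
  ∀ f : ℕ → PseudoType, f 0 = t → (∀ n, Child (f n) (f (n + 1))) →
    ∀ N, ∃ n, N ≤ n ∧ headIsBullet (f n)

/-- A type is a regular and guarded pseudo-type. -/
def IsType (t : PseudoType) : Prop := Regular t ∧ Guarded t

/-- `•^∞`: the unique pseudo-type satisfying `•^∞ = • •^∞`. -/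
def binf : PseudoType := PFunctor.M.corec (fun _ : Unit => ⟨TyHead.bullet, fun _ => ()⟩) ()

/-- Constants. -/
inductive Const : Type
  | pair
  | cfst
  | csnd
  | zero
  | succ

/-- Expressions (with de Bruijn indices for variables). -/
inductive Expr : Type
  | var (x : ℕ)
  | const (k : Const)
  | lam (e : Expr)
  | app (e₁ e₂ : Expr)

def liftRen (f : ℕ → ℕ) : ℕ → ℕ
  | 0 => 0
  | n + 1 => f n + 1

def rename (f : ℕ → ℕ) : Expr → Expr
  | .var n => .var (f n)
  | .const k => .const k
  | .lam e => .lam (rename (liftRen f) e)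
  | .app a b => .app (rename f a) (rename f b)

def liftSub (ρ : ℕ → Expr) : ℕ → Expr
  | 0 => .var 0
  | n + 1 => rename Nat.succ (ρ n)

/-- Simultaneous (capture-avoiding) substitution. -/
def substE (ρ : ℕ → Expr) : Expr → Expr
  | .var n => ρ n
  | .const k => .const k
  | .lam e => .lam (substE (liftSub ρ) e)
  | .app a b => .app (substE ρ a) (substE ρ b)

/-- `subst0 e f` is `e[f/x]` for the topmost variable `x`. -/
def subst0 (e f : Expr) : Expr :=
  substE (fun n => match n with | 0 => f | n + 1 => .var n) e

/-- The pair `⟨e₁, e₂⟩`. -/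
def mkPair (e₁ e₂ : Expr) : Expr := .app (.app (.const .pair) e₁) e₂

/-- Evaluation contexts E ::= [] | E e | fst E | snd E | succ E. -/
inductive ECtx : Type
  | hole
  | app (E : ECtx) (e : Expr)
  | fst (E : ECtx)
  | snd (E : ECtx)
  | succ (E : ECtx)

/-- Plugging an expression into an evaluation context. -/
def ECtx.plug : ECtx → Expr → Expr
  | .hole, e => e
  | .app E f, e => .app (E.plug e) f
  | .fst E, e => .app (.const .cfst) (E.plug e)
  | .snd E, e => .app (.const .csnd) (E.plug e)
  | .succ E, e => .app (.const .succ) (E.plug e)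

/-- Head reduction rules. -/
inductive HeadRed : Expr → Expr → Prop
  | beta (e f) : HeadRed (.app (.lam e) f) (subst0 e f)
  | fst (e₁ e₂) : HeadRed (.app (.const .cfst) (mkPair e₁ e₂)) e₁
  | snd (e₁ e₂) : HeadRed (.app (.const .csnd) (mkPair e₁ e₂)) e₂

/-- Weak head (call-by-name) reduction: head rules closed under evaluation contexts. -/
def Red (a b : Expr) : Prop :=
  ∃ (E : ECtx) (e f : Expr), HeadRed e f ∧ a = E.plug e ∧ b = E.plug f

/-- Many-step reduction. -/
def RedStar : Expr → Expr → Prop := Relation.ReflTransGen Red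

/-- (Weak head) normal forms. -/
def NormalForm (e : Expr) : Prop := ∀ f, ¬ Red e f

/-- Typing contexts: finite maps from (de Bruijn) variables to types. -/
def Ctx : Type := ℕ → Option PseudoType

/-- Extending a typing context with a type for the topmost variable. -/
def Ctx.cons (t : PseudoType) (Γ : Ctx) : Ctx :=
  fun n => match n with | 0 => some t | n + 1 => Γ n

/-- The type assignment κ for constants. -/
inductive KappaTy : Const → PseudoType → Prop
  | pair {t s} : IsType t → IsType s →
      KappaTy .pair (tarrow t (tarrow s (tprod t s)))
  | fst {t s} : IsType t → IsType s →
      KappaTy .cfst (tarrow (tprod t s) t)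
  | snd {t s} : IsType t → IsType s →
      KappaTy .csnd (tarrow (tprod t s) s)
  | zero : KappaTy .zero tnat
  | succ : KappaTy .succ (tarrow tnat tnat)

/-- The type assignment system λ•→. -/
inductive Types : Ctx → Expr → PseudoType → Prop
  | ax {Γ x t} : Γ x = some t → IsType t → Types Γ (.var x) t
  | const {Γ k t} : KappaTy k t → Types Γ (.const k) t
  | bulletI {Γ e t} : Types Γ e t → Types Γ e (tbullet t)
  | arrowI {Γ e n t s} :
      Types (Ctx.cons (tbulletN n t) Γ) e (tbulletN n s) →
      Types Γ (.lam e) (tbulletN n (tarrow t s))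
  | arrowE {Γ e₁ e₂ n t s} :
      Types Γ e₁ (tbulletN n (tarrow t s)) → Types Γ e₂ (tbulletN n t) →
      Types Γ (.app e₁ e₂) (tbulletN n s)


/-- The typing system λ•→ restricted to derivations that do not use the rule
(const). -/
inductive TypesNC : Ctx → Expr → PseudoType → Prop
  | ax {Γ x t} : Γ x = some t → IsType t → TypesNC Γ (.var x) t
  | bulletI {Γ e t} : TypesNC Γ e t → TypesNC Γ e (tbullet t)
  | arrowI {Γ e n t s} :
      TypesNC (Ctx.cons (tbulletN n t) Γ) e (tbulletN n s) →
      TypesNC Γ (.lam e) (tbulletN n (tarrow t s))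
  | arrowE {Γ e₁ e₂ n t s} :
      TypesNC Γ e₁ (tbulletN n (tarrow t s)) → TypesNC Γ e₂ (tbulletN n t) →
      TypesNC Γ (.app e₁ e₂) (tbulletN n s)

/-- Finite μ-types of Nakano's system (de Bruijn binder for μ). -/
inductive MuTy : Type
  | var (n : ℕ)
  | arrow (T S : MuTy)
  | bullet (T : MuTy)
  | mu (T : MuTy)

/-- Shift the free μ-type variables ≥ c by one. -/
def shiftMu (c : ℕ) : MuTy → MuTy
  | .var n => if n < c then .var n else .var (n + 1)
  | .arrow T S => .arrow (shiftMu c T) (shiftMu c S)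
  | .bullet T => .bullet (shiftMu c T)
  | .mu T => .mu (shiftMu (c + 1) T)

/-- Capture-avoiding substitution of `U` for the variable `k`. -/
def substMu (U : MuTy) : ℕ → MuTy → MuTy
  | k, .var n => if n = k then U else if k < n then .var (n - 1) else .var n
  | k, .arrow T S => .arrow (substMu U k T) (substMu U k S)
  | k, .bullet T => .bullet (substMu U k T)
  | k, .mu T => .mu (substMu (shiftMu 0 U) (k + 1) T)

/-- The variable `k` has an occurrence that is not under the scope of a `•`. -/
def OccUng : ℕ → MuTy → Prop
  | k, .var n => n = k
  | k, .arrow T S => OccUng k T ∨ OccUng k S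
  | _, .bullet _ => False
  | k, .mu T => OccUng (k + 1) T

/-- Guardedness of μ-types: in `μX.T` the variable `X` occurs in `T` only
under the scope of a `•`. -/
def MuGuarded : MuTy → Prop
  | .var _ => True
  | .arrow T S => MuGuarded T ∧ MuGuarded S
  | .bullet T => MuGuarded T
  | .mu T => MuGuarded T ∧ ¬ OccUng 0 T

/-- The graph of the μ-normal form function `nf_μ`:
`nf_μ(X) = X`, `nf_μ(•T) = •T`, `nf_μ(T→S) = nf_μ(T) → nf_μ(S)`,
`nf_μ(μX.T) = nf_μ(T[μX.T/X])`. -/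
inductive NfRel : MuTy → MuTy → Prop
  | var (n) : NfRel (.var n) (.var n)
  | bullet (T) : NfRel (.bullet T) (.bullet T)
  | arrow {T T' S S'} : NfRel T T' → NfRel S S' →
      NfRel (.arrow T S) (.arrow T' S')
  | mu {T U} : NfRel (substMu (.mu T) 0 T) U → NfRel (.mu T) U

/-- The μ-normal form `nf_μ` (defined on all μ-types; on guarded μ-types it
agrees with the recursive equations of `NfRel`). -/
noncomputable def nfMu (T : MuTy) : MuTy :=
  letI := Classical.propDecidable (∃ U, NfRel T U)
  if h : ∃ U, NfRel T U then h.choose else T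

/-- The translation `tree` from μ-types to λ•→ types, defined by
coinduction: `tree T = X` if `nf_μ T = X`; `tree T = • tree S` if
`nf_μ T = •S`; `tree T = tree T₁ → tree T₂` if `nf_μ T = T₁ → T₂`. -/
noncomputable def treeOfMu : MuTy → PseudoType :=
  PFunctor.M.corec (fun T =>
    match nfMu T with
    | .var n => (⟨TyHead.var n, Empty.elim⟩ : TyP.Obj MuTy)
    | .arrow T₁ T₂ => ⟨TyHead.arrow, fun b => bif b then T₂ else T₁⟩
    | .bullet T' => ⟨TyHead.bullet, fun _ => T'⟩
    | .mu _ => ⟨TyHead.nat, Empty.elim⟩)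

/-- The equivalence `T ≃ S` identifying μ-types with equal infinite
unfoldings. -/
noncomputable def MuEquiv (T S : MuTy) : Prop := treeOfMu T = treeOfMu S

/-- Iterated `•` on μ-types. -/
def muBulletN (n : ℕ) (T : MuTy) : MuTy := MuTy.bullet^[n] T

/-- The subtyping relation `Σ ⊢ T ≤ S` of λNak.  The set `Σ` of subtype
assumptions between the pairwise-distinct bound variables introduced by the
(μ) rule is represented, in de Bruijn style, by the number `d` of
assumptions in scope (the assumption pairs relate the two variables bound at
the same depth on the two sides). -/
inductive NakSub : ℕ → MuTy → MuTy → Prop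
  | delay (d T) : NakSub d T (.bullet T)
  | arrowBullet (d T S) : NakSub d (.arrow T S) (.arrow (.bullet T) (.bullet S))
  | bulletArrow (d T S) : NakSub d (.arrow (.bullet T) (.bullet S)) (.bullet (.arrow T S))
  | var {d n} : n < d → NakSub d (.var n) (.var n)
  | equiv {d T S} : MuEquiv T S → NakSub d T S
  | mu {d T S} : NakSub (d + 1) T S → NakSub d (.mu T) (.mu S)
  | bullet {d T S} : NakSub d T S → NakSub d (.bullet T) (.bullet S)
  | arrow {d T₁ T₂ S₁ S₂} : NakSub d S₁ T₁ → NakSub d T₂ S₂ →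
      NakSub d (.arrow T₁ T₂) (.arrow S₁ S₂)

/-- Typing contexts of λNak. -/
def NakCtx : Type := ℕ → Option MuTy

def NakCtx.cons (T : MuTy) (Γ : NakCtx) : NakCtx :=
  fun n => match n with | 0 => some T | n + 1 => Γ n

/-- The typing rules of λNak. -/
inductive NakTypes : NakCtx → Expr → MuTy → Prop
  | ax {Γ x T} : Γ x = some T → NakTypes Γ (.var x) T
  | sub {Γ e T T'} : NakTypes Γ e T → NakSub 0 T T' → NakTypes Γ e T'
  | bulletE {Γ e T} :
      NakTypes (fun x => (Γ x).map MuTy.bullet) e (.bullet T) →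
      NakTypes Γ e T
  | arrowI {Γ e T S} : NakTypes (NakCtx.cons T Γ) e S →
      NakTypes Γ (.lam e) (.arrow T S)
  | arrowE {Γ e₁ e₂ n T S} :
      NakTypes Γ e₁ (muBulletN n (.arrow T S)) →
      NakTypes Γ e₂ (muBulletN n T) →
      NakTypes Γ (.app e₁ e₂) (muBulletN n S)

/-! ### Auxiliary development -/

section MUtil

open PFunctor

lemma pt_ext {x y : PseudoType} (h : PFunctor.M.dest x = PFunctor.M.dest y) : x = y := by
  rw [← PFunctor.M.mk_dest x, ← PFunctor.M.mk_dest y, h]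

lemma tvar_dest (n : ℕ) : PFunctor.M.dest (tvar n) = ⟨TyHead.var n, Empty.elim⟩ := rfl
lemma tnat_dest : PFunctor.M.dest tnat = ⟨TyHead.nat, Empty.elim⟩ := rfl
lemma tbullet_dest (a : PseudoType) :
    PFunctor.M.dest (tbullet a) = ⟨TyHead.bullet, fun _ => a⟩ := rfl
lemma tarrow_dest (a b : PseudoType) :
    PFunctor.M.dest (tarrow a b) = ⟨TyHead.arrow, fun i => bif i then b else a⟩ := rfl

lemma obj_inj {h : TyHead} {f g : tyArity h → PseudoType}
    (e : (⟨h, f⟩ : TyP.Obj PseudoType) = ⟨h, g⟩) : f = g := by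
  injection e

lemma tbullet_inj {a b : PseudoType} (h : tbullet a = tbullet b) : a = b := by
  have := obj_inj (PFunctor.M.mk_inj h)
  exact congrFun this ()

lemma tarrow_inj {a b a' b' : PseudoType} (h : tarrow a b = tarrow a' b') :
    a = a' ∧ b = b' := by
  have := obj_inj (PFunctor.M.mk_inj h)
  exact ⟨congrFun this false, congrFun this true⟩

end MUtil

section Msubst

/-- Lifting a simultaneous substitution under a binder. -/
def mlift (ρ : ℕ → MuTy) : ℕ → MuTy
  | 0 => .var 0
  | n + 1 => shiftMu 0 (ρ n)

/-- Simultaneous substitution on μ-types. -/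
def msubst (ρ : ℕ → MuTy) : MuTy → MuTy
  | .var n => ρ n
  | .arrow T S => .arrow (msubst ρ T) (msubst ρ S)
  | .bullet T => .bullet (msubst ρ T)
  | .mu T => .mu (msubst (mlift ρ) T)

lemma msubst_congr {ρ ρ' : ℕ → MuTy} (T : MuTy) (h : ∀ n, ρ n = ρ' n) :
    msubst ρ T = msubst ρ' T := by
  induction T generalizing ρ ρ' with
  | var n => exact h n
  | arrow T S ihT ihS => simp [msubst, ihT h, ihS h]
  | bullet T ih => simp [msubst, ih h]
  | mu T ih =>
    simp only [msubst, MuTy.mu.injEq]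
    exact ih (fun n => by cases n <;> simp [mlift, h])

lemma msubst_id (T : MuTy) : msubst .var T = T := by
  induction T with
  | var n => rfl
  | arrow T S ihT ihS => simp [msubst, ihT, ihS]
  | bullet T ih => simp [msubst, ih]
  | mu T ih =>
    simp only [msubst, MuTy.mu.injEq]
    rw [msubst_congr T (ρ' := .var) (fun n => by cases n <;> simp [mlift, shiftMu])]
    exact ih

lemma shift_shift (V : MuTy) : ∀ (c d : ℕ), d ≤ c →
    shiftMu (c+1) (shiftMu d V) = shiftMu d (shiftMu c V) := by
  induction V with
  | var n =>
    intro c d hdc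
    by_cases h1 : n < d
    · simp [shiftMu, h1, Nat.lt_succ_of_lt (h1.trans_le hdc), h1.trans_le hdc]
    · by_cases h2 : n < c
      · simp [shiftMu, h1, h2, Nat.succ_lt_succ h2]
      · have : ¬ n + 1 < c + 1 := by omega
        have h3 : ¬ n + 1 < d := by omega
        simp [shiftMu, h1, h2, this, h3]
  | arrow T S ihT ihS => intro c d h; simp [shiftMu, ihT c d h, ihS c d h]
  | bullet T ih => intro c d h; simp [shiftMu, ih c d h]
  | mu T ih =>
    intro c d h
    simp [shiftMu, ih (c+1) (d+1) (by omega)]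

lemma msubst_shift (V : MuTy) : ∀ (ρ : ℕ → MuTy) (c : ℕ),
    msubst ρ (shiftMu c V) = msubst (fun n => if n < c then ρ n else ρ (n+1)) V := by
  induction V with
  | var n =>
    intro ρ c
    by_cases h : n < c <;> simp [shiftMu, msubst, h]
  | arrow T S ihT ihS => intro ρ c; simp [shiftMu, msubst, ihT, ihS]
  | bullet T ih => intro ρ c; simp [shiftMu, msubst, ih]
  | mu T ih =>
    intro ρ c
    simp only [shiftMu, msubst, MuTy.mu.injEq]
    rw [ih (mlift ρ) (c+1)]
    refine msubst_congr T (fun n => ?_)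
    cases n with
    | zero => simp [mlift]
    | succ m => by_cases h : m < c <;> simp [mlift, Nat.succ_lt_succ_iff, h]

lemma shift_msubst (V : MuTy) : ∀ (ρ : ℕ → MuTy) (c : ℕ),
    shiftMu c (msubst ρ V) = msubst (fun n => shiftMu c (ρ n)) V := by
  induction V with
  | var n => intro ρ c; rfl
  | arrow T S ihT ihS => intro ρ c; simp [shiftMu, msubst, ihT, ihS]
  | bullet T ih => intro ρ c; simp [shiftMu, msubst, ih]
  | mu T ih =>
    intro ρ c
    simp only [shiftMu, msubst, MuTy.mu.injEq]
    rw [ih (mlift ρ) (c+1)]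
    refine msubst_congr T (fun n => ?_)
    cases n with
    | zero => simp [mlift, shiftMu]
    | succ m => simp [mlift, shift_shift (ρ m) c 0 (Nat.zero_le c)]

lemma msubst_comp (T : MuTy) : ∀ (ρ₁ ρ₂ : ℕ → MuTy),
    msubst ρ₂ (msubst ρ₁ T) = msubst (fun n => msubst ρ₂ (ρ₁ n)) T := by
  induction T with
  | var n => intro ρ₁ ρ₂; rfl
  | arrow T S ihT ihS => intro ρ₁ ρ₂; simp [msubst, ihT, ihS]
  | bullet T ih => intro ρ₁ ρ₂; simp [msubst, ih]
  | mu T ih =>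
    intro ρ₁ ρ₂
    simp only [msubst, MuTy.mu.injEq]
    rw [ih]
    refine msubst_congr T (fun n => ?_)
    cases n with
    | zero => simp [mlift, msubst]
    | succ m =>
      simp only [mlift, msubst_shift (ρ₁ m) (mlift ρ₂) 0, shift_msubst (ρ₁ m) ρ₂ 0]
      refine msubst_congr (ρ₁ m) (fun n => ?_)
      simp [mlift]

/-- Single substitution as a simultaneous substitution. -/
def sgl (U : MuTy) (k : ℕ) : ℕ → MuTy :=
  fun n => if n = k then U else if k < n then .var (n-1) else .var n

lemma subst_eq_msubst (T : MuTy) : ∀ (U : MuTy) (k : ℕ),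
    substMu U k T = msubst (sgl U k) T := by
  induction T with
  | var n => intro U k; rfl
  | arrow T S ihT ihS => intro U k; simp [substMu, msubst, ihT, ihS]
  | bullet T ih => intro U k; simp [substMu, msubst, ih]
  | mu T ih =>
    intro U k
    simp only [substMu, msubst, MuTy.mu.injEq]
    rw [ih]
    refine msubst_congr T (fun n => ?_)
    cases n with
    | zero => simp [sgl, mlift]
    | succ m =>
      simp only [sgl, mlift]
      by_cases h1 : m = k
      · simp [h1]
      · by_cases h2 : k < m
        · have h3 : ¬ (m + 1 = k + 1) := by omega
          have h4 : k + 1 < m + 1 := by omega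
          simp only [h1, h2, h3, h4, if_true, if_false, ite_true, ite_false, shiftMu]
          have : ¬ (m-1) < 0 := by omega
          simp only [this, if_false, MuTy.var.injEq]
          omega
        · have h3 : ¬ (m + 1 = k + 1) := by omega
          have h4 : ¬ (k + 1 < m + 1) := by omega
          simp [h1, h2, h3, h4, shiftMu]

/-- Prepending a term to a substitution. -/
def consSub (U : MuTy) (ρ : ℕ → MuTy) : ℕ → MuTy
  | 0 => U
  | n + 1 => ρ n

lemma subst0_msubst (B : MuTy) (M : MuTy) (σ : ℕ → MuTy) :
    substMu M 0 (msubst (mlift σ) B) = msubst (consSub M σ) B := by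
  rw [subst_eq_msubst, msubst_comp]
  refine msubst_congr B (fun n => ?_)
  cases n with
  | zero => simp [mlift, msubst, sgl, consSub]
  | succ m =>
    simp only [mlift, consSub, msubst_shift (σ m) (sgl M 0) 0]
    have : ∀ k, (fun n => if n < 0 then sgl M 0 n else sgl M 0 (n+1)) k = MuTy.var k := by
      intro k; simp [sgl]
    rw [msubst_congr (σ m) this, msubst_id]

end Msubst
section NfTree

lemma NfRel.det {T U : MuTy} (h : NfRel T U) : ∀ V, NfRel T V → U = V := by
  induction h with
  | var n => intro V hv; cases hv; rfl
  | bullet T => intro V hv; cases hv; rfl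
  | arrow h1 h2 ih1 ih2 =>
    intro V hv
    cases hv with
    | arrow g1 g2 => rw [ih1 _ g1, ih2 _ g2]
  | mu h ih =>
    intro V hv
    cases hv with
    | mu g => exact ih _ g

lemma NfRel.not_mu {T U : MuTy} (h : NfRel T U) : ∀ V, U ≠ .mu V := by
  induction h with
  | var n => intro V hv; cases hv
  | bullet T => intro V hv; cases hv
  | arrow h1 h2 ih1 ih2 => intro V hv; cases hv
  | mu h ih => exact ih

lemma nfMu_eq {T U : MuTy} (h : NfRel T U) : nfMu T = U := by
  have he : ∃ U, NfRel T U := ⟨U, h⟩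
  unfold nfMu
  rw [dif_pos he]
  exact he.choose_spec.det U h

lemma nfMu_none {T : MuTy} (h : ¬ ∃ U, NfRel T U) : nfMu T = T := by
  unfold nfMu
  rw [dif_neg h]

/-- The generator of `treeOfMu`. -/
private noncomputable def treeGen : MuTy → TyP.Obj MuTy := fun T =>
    match nfMu T with
    | .var n => (⟨TyHead.var n, Empty.elim⟩ : TyP.Obj MuTy)
    | .arrow T₁ T₂ => ⟨TyHead.arrow, fun b => bif b then T₂ else T₁⟩
    | .bullet T' => ⟨TyHead.bullet, fun _ => T'⟩
    | .mu _ => ⟨TyHead.nat, Empty.elim⟩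

lemma treeOfMu_eq_corec : treeOfMu = PFunctor.M.corec treeGen := rfl

lemma tree_dest (T : MuTy) :
    PFunctor.M.dest (treeOfMu T) = TyP.map treeOfMu (treeGen T) := by
  rw [treeOfMu_eq_corec]
  exact PFunctor.M.dest_corec treeGen T

lemma tree_dest_var {T : MuTy} {n : ℕ} (h : nfMu T = .var n) :
    PFunctor.M.dest (treeOfMu T) = ⟨TyHead.var n, Empty.elim⟩ := by
  rw [tree_dest, treeGen, h]
  simp only [PFunctor.map]
  congr 1
  funext i
  exact i.elim

lemma tree_dest_bullet {T S : MuTy} (h : nfMu T = .bullet S) :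
    PFunctor.M.dest (treeOfMu T) = ⟨TyHead.bullet, fun _ => treeOfMu S⟩ := by
  rw [tree_dest, treeGen, h]
  rfl

lemma tree_dest_arrow {T A B : MuTy} (h : nfMu T = .arrow A B) :
    PFunctor.M.dest (treeOfMu T) =
      ⟨TyHead.arrow, fun i => bif i then treeOfMu B else treeOfMu A⟩ := by
  rw [tree_dest, treeGen, h]
  simp only [PFunctor.map]
  congr 1
  funext i
  cases i <;> rfl

lemma tree_dest_mu {T V : MuTy} (h : nfMu T = .mu V) :
    PFunctor.M.dest (treeOfMu T) = ⟨TyHead.nat, Empty.elim⟩ := by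
  rw [tree_dest, treeGen, h]
  simp only [PFunctor.map]
  congr 1
  funext i
  exact i.elim

lemma tree_var (n : ℕ) : treeOfMu (.var n) = tvar n :=
  pt_ext (by rw [tree_dest_var (nfMu_eq (NfRel.var n))]; rfl)

lemma tree_bullet (S : MuTy) : treeOfMu (.bullet S) = tbullet (treeOfMu S) :=
  pt_ext (by rw [tree_dest_bullet (nfMu_eq (NfRel.bullet S))]; rfl)

lemma nfRel_tree_eq {T U : MuTy} (h : NfRel T U) : treeOfMu T = treeOfMu U := by
  apply PFunctor.M.bisim
    (fun x y => (∃ T U, NfRel T U ∧ x = treeOfMu T ∧ y = treeOfMu U) ∨ x = y)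
  · rintro x y (⟨T, U, h, rfl, rfl⟩ | rfl)
    · have hn := nfMu_eq h
      cases U with
      | var n =>
        exact ⟨TyHead.var n, Empty.elim, Empty.elim, tree_dest_var hn,
          tree_dest_var (nfMu_eq (NfRel.var n)), fun i => i.elim⟩
      | bullet S =>
        exact ⟨TyHead.bullet, fun _ => treeOfMu S, fun _ => treeOfMu S,
          tree_dest_bullet hn, tree_dest_bullet (nfMu_eq (NfRel.bullet S)),
          fun _ => Or.inr rfl⟩
      | arrow A B =>
        by_cases hex : ∃ V, NfRel (MuTy.arrow A B) V
        · obtain ⟨V, hV⟩ := hex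
          cases hV with
          | @arrow _ A' _ B' g1 g2 =>
            refine ⟨TyHead.arrow, fun i => bif i then treeOfMu B else treeOfMu A,
              fun i => bif i then treeOfMu B' else treeOfMu A',
              tree_dest_arrow hn, tree_dest_arrow (nfMu_eq (NfRel.arrow g1 g2)), ?_⟩
            intro i
            cases i
            · exact Or.inl ⟨A, A', g1, rfl, rfl⟩
            · exact Or.inl ⟨B, B', g2, rfl, rfl⟩
        · refine ⟨TyHead.arrow, fun i => bif i then treeOfMu B else treeOfMu A,
            fun i => bif i then treeOfMu B else treeOfMu A,
            tree_dest_arrow hn, tree_dest_arrow (nfMu_none hex), fun i => Or.inr rfl⟩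
      | mu V => exact absurd rfl (h.not_mu V)
    · exact ⟨(PFunctor.M.dest x).1, (PFunctor.M.dest x).2, (PFunctor.M.dest x).2,
        rfl, rfl, fun i => Or.inr rfl⟩
  · exact Or.inl ⟨T, U, h, rfl, rfl⟩

lemma tree_arrow (A B : MuTy) :
    treeOfMu (.arrow A B) = tarrow (treeOfMu A) (treeOfMu B) := by
  apply pt_ext
  rw [tarrow_dest]
  by_cases hex : ∃ V, NfRel (MuTy.arrow A B) V
  · obtain ⟨V, hV⟩ := hex
    cases hV with
    | @arrow _ A' _ B' g1 g2 =>
      rw [tree_dest_arrow (nfMu_eq (NfRel.arrow g1 g2)),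
        nfRel_tree_eq g1, nfRel_tree_eq g2]
  · rw [tree_dest_arrow (nfMu_none hex)]

lemma tree_mu_unfold {T : MuTy} (h : ∃ U, NfRel (substMu (.mu T) 0 T) U) :
    treeOfMu (.mu T) = treeOfMu (substMu (.mu T) 0 T) := by
  obtain ⟨U, hU⟩ := h
  rw [nfRel_tree_eq (NfRel.mu hU), nfRel_tree_eq hU]

lemma no_nf_ne_muvar0 {T U : MuTy} (h : NfRel T U) : T ≠ .mu (.var 0) := by
  induction h with
  | var n => intro e; cases e
  | bullet T => intro e; cases e
  | arrow h1 h2 ih1 ih2 => intro e; cases e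
  | @mu T U h ih =>
    intro e
    cases e
    exact ih (by simp [substMu])

lemma tree_munat : treeOfMu (.mu (.var 0)) = tnat := by
  apply pt_ext
  have hne : ¬ ∃ U, NfRel (MuTy.mu (.var 0)) U := by
    rintro ⟨U, hU⟩
    exact no_nf_ne_muvar0 hU rfl
  rw [tree_dest_mu (nfMu_none hne)]
  rfl

lemma tree_head_bullet {S : MuTy} {u : PseudoType} (h : treeOfMu S = tbullet u) :
    ∃ S', treeOfMu S' = u := by
  have hd := congrArg PFunctor.M.dest h
  rw [tbullet_dest] at hd
  cases hn : nfMu S with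
  | var n => rw [tree_dest_var hn] at hd; cases congrArg Sigma.fst hd
  | bullet S' =>
    rw [tree_dest_bullet hn] at hd
    exact ⟨S', congrFun (obj_inj hd) ()⟩
  | arrow A B => rw [tree_dest_arrow hn] at hd; cases congrArg Sigma.fst hd
  | mu V => rw [tree_dest_mu hn] at hd; cases congrArg Sigma.fst hd

lemma tree_head_arrow {S : MuTy} {u v : PseudoType} (h : treeOfMu S = tarrow u v) :
    ∃ A B, treeOfMu A = u ∧ treeOfMu B = v := by
  have hd := congrArg PFunctor.M.dest h
  rw [tarrow_dest] at hd
  cases hn : nfMu S with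
  | var n => rw [tree_dest_var hn] at hd; cases congrArg Sigma.fst hd
  | bullet S' => rw [tree_dest_bullet hn] at hd; cases congrArg Sigma.fst hd
  | arrow A B =>
    rw [tree_dest_arrow hn] at hd
    have h2 := obj_inj hd
    exact ⟨A, B, congrFun h2 false, congrFun h2 true⟩
  | mu V => rw [tree_dest_mu hn] at hd; cases congrArg Sigma.fst hd

lemma muBulletN_succ (n : ℕ) (S : MuTy) :
    muBulletN (n+1) S = .bullet (muBulletN n S) :=
  Function.iterate_succ_apply' _ _ _

lemma tbulletN_succ (n : ℕ) (u : PseudoType) :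
    tbulletN (n+1) u = tbullet (tbulletN n u) :=
  Function.iterate_succ_apply' _ _ _

lemma tree_muBulletN (n : ℕ) (S : MuTy) :
    treeOfMu (muBulletN n S) = tbulletN n (treeOfMu S) := by
  induction n with
  | zero => rfl
  | succ n ih => rw [muBulletN_succ, tbulletN_succ, tree_bullet, ih]

lemma tree_head_bulletN {n : ℕ} {S : MuTy} {u : PseudoType}
    (h : treeOfMu S = tbulletN n u) :
    ∃ S', treeOfMu S' = u ∧ treeOfMu S = treeOfMu (muBulletN n S') := by
  induction n generalizing S with
  | zero => exact ⟨S, h, rfl⟩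
  | succ n ih =>
    rw [tbulletN_succ] at h
    obtain ⟨S₁, hS₁⟩ := tree_head_bullet h
    obtain ⟨S', h1, h2⟩ := ih hS₁
    refine ⟨S', h1, ?_⟩
    rw [muBulletN_succ, tree_bullet, ← h2, hS₁, h]

end NfTree
section Canon

/-- Generator for `canon`: replace product nodes by `Nat` leaves. -/
noncomputable def canonGen : PseudoType → TyP.Obj PseudoType := fun t =>
  match PFunctor.M.dest t with
  | ⟨TyHead.prod, _⟩ => ⟨TyHead.nat, Empty.elim⟩
  | ⟨TyHead.var n, f⟩ => ⟨TyHead.var n, f⟩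
  | ⟨TyHead.nat, f⟩ => ⟨TyHead.nat, f⟩
  | ⟨TyHead.arrow, f⟩ => ⟨TyHead.arrow, f⟩
  | ⟨TyHead.bullet, f⟩ => ⟨TyHead.bullet, f⟩

/-- The canonical collapse of a pseudo-type: products are replaced by `Nat`. -/
noncomputable def canon : PseudoType → PseudoType := PFunctor.M.corec canonGen

lemma canon_dest (t : PseudoType) :
    PFunctor.M.dest (canon t) = TyP.map canon (canonGen t) :=
  PFunctor.M.dest_corec canonGen t

lemma canon_var (n : ℕ) : canon (tvar n) = tvar n := by
  apply pt_ext
  rw [canon_dest, tvar_dest]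
  show (⟨TyHead.var n, canon ∘ Empty.elim⟩ : TyP.Obj PseudoType) = _
  congr 1
  funext i
  exact i.elim

lemma canon_nat : canon tnat = tnat := by
  apply pt_ext
  rw [canon_dest, tnat_dest]
  show (⟨TyHead.nat, canon ∘ Empty.elim⟩ : TyP.Obj PseudoType) = _
  congr 1
  funext i
  exact i.elim

lemma canon_prod (a b : PseudoType) : canon (tprod a b) = tnat := by
  apply pt_ext
  rw [canon_dest, tnat_dest]
  show (⟨TyHead.nat, canon ∘ Empty.elim⟩ : TyP.Obj PseudoType) = _
  congr 1
  funext i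
  exact i.elim

lemma canon_bullet (a : PseudoType) : canon (tbullet a) = tbullet (canon a) := by
  apply pt_ext
  rw [canon_dest, tbullet_dest]
  rfl

lemma canon_arrow (a b : PseudoType) :
    canon (tarrow a b) = tarrow (canon a) (canon b) := by
  apply pt_ext
  rw [canon_dest, tarrow_dest]
  show (⟨TyHead.arrow, canon ∘ (fun i => bif i then b else a)⟩ : TyP.Obj PseudoType) = _
  congr 1
  funext i
  cases i <;> rfl

lemma tree_shape_var {S : MuTy} {n : ℕ} (h : nfMu S = .var n) :
    treeOfMu S = tvar n :=
  pt_ext (by rw [tree_dest_var h, tvar_dest])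

lemma tree_shape_bullet {S S' : MuTy} (h : nfMu S = .bullet S') :
    treeOfMu S = tbullet (treeOfMu S') :=
  pt_ext (by rw [tree_dest_bullet h, tbullet_dest])

lemma tree_shape_arrow {S A B : MuTy} (h : nfMu S = .arrow A B) :
    treeOfMu S = tarrow (treeOfMu A) (treeOfMu B) :=
  pt_ext (by rw [tree_dest_arrow h, tarrow_dest])

lemma tree_shape_mu {S V : MuTy} (h : nfMu S = .mu V) : treeOfMu S = tnat :=
  pt_ext (by rw [tree_dest_mu h, tnat_dest])

/-- `canon` fixes every tree of a μ-type. -/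
lemma canon_tree (S : MuTy) : canon (treeOfMu S) = treeOfMu S := by
  apply PFunctor.M.bisim (fun x y => ∃ S : MuTy, x = canon (treeOfMu S) ∧ y = treeOfMu S)
  · rintro x y ⟨S, rfl, rfl⟩
    cases hn : nfMu S with
    | var n =>
      rw [tree_shape_var hn, canon_var]
      exact ⟨TyHead.var n, Empty.elim, Empty.elim, tvar_dest n, tvar_dest n,
        fun i => i.elim⟩
    | bullet S' =>
      rw [tree_shape_bullet hn, canon_bullet]
      exact ⟨TyHead.bullet, fun _ => canon (treeOfMu S'), fun _ => treeOfMu S',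
        tbullet_dest _, tbullet_dest _, fun _ => ⟨S', rfl, rfl⟩⟩
    | arrow A B =>
      rw [tree_shape_arrow hn, canon_arrow]
      refine ⟨TyHead.arrow, fun i => bif i then canon (treeOfMu B) else canon (treeOfMu A),
        fun i => bif i then treeOfMu B else treeOfMu A, tarrow_dest _ _, tarrow_dest _ _, ?_⟩
      intro i
      cases i
      · exact ⟨A, rfl, rfl⟩
      · exact ⟨B, rfl, rfl⟩
    | mu V =>
      rw [tree_shape_mu hn, canon_nat]
      exact ⟨TyHead.nat, Empty.elim, Empty.elim, tnat_dest, tnat_dest, fun i => i.elim⟩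
  · exact ⟨S, rfl, rfl⟩

lemma canon_bulletN (n : ℕ) (t : PseudoType) :
    canon (tbulletN n t) = tbulletN n (canon t) := by
  induction n with
  | zero => rfl
  | succ n ih => rw [tbulletN_succ, tbulletN_succ, canon_bullet, ih]

end Canon

section IsTypeLemmas

lemma regular_child {t s : PseudoType} (hc : Child t s) (ht : Regular t) : Regular s :=
  Set.Finite.subset ht (fun u hu => (Relation.ReflTransGen.single hc).trans hu)

lemma guarded_child {t s : PseudoType} (hc : Child t s) (ht : Guarded t) : Guarded s := by
  intro f h0 hstep N
  set g : ℕ → PseudoType := fun n => match n with | 0 => t | n+1 => f n with hg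
  have h1 : ∀ n, Child (g n) (g (n+1)) := by
    intro n
    cases n with
    | zero => simpa [hg, h0] using hc
    | succ m => exact hstep m
  obtain ⟨n, hn1, hn2⟩ := ht g rfl h1 (N+1)
  match n, hn1, hn2 with
  | m+1, hn1, hn2 => exact ⟨m, by omega, hn2⟩

lemma isType_child {t s : PseudoType} (hc : Child t s) (ht : IsType t) : IsType s :=
  ⟨regular_child hc ht.1, guarded_child hc ht.2⟩

lemma child_tbullet (a : PseudoType) : Child (tbullet a) a := ⟨(), rfl⟩

lemma child_tarrow_left (a b : PseudoType) : Child (tarrow a b) a := ⟨false, rfl⟩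

lemma child_tarrow_right (a b : PseudoType) : Child (tarrow a b) b := ⟨true, rfl⟩

lemma isType_bullet {a : PseudoType} (h : IsType (tbullet a)) : IsType a :=
  isType_child (child_tbullet a) h

lemma isType_arrow {a b : PseudoType} (h : IsType (tarrow a b)) :
    IsType a ∧ IsType b :=
  ⟨isType_child (child_tarrow_left a b) h, isType_child (child_tarrow_right a b) h⟩

lemma isType_bulletN {n : ℕ} {t : PseudoType} (h : IsType (tbulletN n t)) : IsType t := by
  induction n with
  | zero => exact h
  | succ n ih =>
    rw [tbulletN_succ] at h
    exact ih (isType_bullet h)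

end IsTypeLemmas
section Representation

lemma wf_of_no_descending_seq {α : Type*} (r : α → α → Prop)
    (h : ∀ f : ℕ → α, ¬ ∀ n, r (f (n+1)) (f n)) : WellFounded r := by
  classical
  constructor
  intro a
  by_contra ha
  have step : ∀ b, ¬ Acc r b → ∃ c, r c b ∧ ¬ Acc r c := by
    intro b hb
    by_contra hc
    push_neg at hc
    exact hb (Acc.intro b hc)
  choose g hg1 hg2 using step
  let f : ℕ → {b : α // ¬ Acc r b} := fun n =>
    Nat.rec ⟨a, ha⟩ (fun _ p => ⟨g p.1 p.2, hg2 p.1 p.2⟩) n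
  exact h (fun n => (f n).1) (fun n => hg1 (f n).1 (f n).2)

/-- The head of the tree is an arrow. -/
def Desc (a q : PseudoType) : Prop :=
  Guarded q ∧ (PFunctor.M.dest q).1 = TyHead.arrow ∧ Child q a

lemma desc_wf : WellFounded Desc := by
  apply wf_of_no_descending_seq
  intro f hf
  obtain ⟨n, -, hb⟩ := (hf 0).1 f rfl (fun n => (hf n).2.2) 0
  have := (hf n).2.1
  rw [hb] at this
  cases this

lemma guarded_subtree {t q : PseudoType} (ht : Guarded t) (h : Subtree t q) :
    Guarded q := by
  induction h with
  | refl => exact ht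
  | tail hsub hchild ih => exact guarded_child hchild ih

lemma child_of_dest {q : PseudoType} {h : TyHead} {f : tyArity h → PseudoType}
    (hd : PFunctor.M.dest q = ⟨h, f⟩) (b : tyArity h) : Child q (f b) := by
  unfold Child
  rw [hd]
  exact ⟨b, rfl⟩

/-- Input of the representation construction: a binding stack `L` of subtrees
of `t₀` and a current subtree `q`. -/
structure RepIn (t₀ : PseudoType) where
  L : List PseudoType
  q : PseudoType
  nodup : L.Nodup
  subL : ∀ x ∈ L, Subtree t₀ x
  subq : Subtree t₀ q

noncomputable local instance : DecidableEq PseudoType := fun _ _ => Classical.propDecidable _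

local instance : WellFoundedRelation PseudoType := ⟨Desc, desc_wf⟩

variable {t₀ : PseudoType}

lemma length_le_card (hreg : Regular t₀) {L : List PseudoType} (h1 : L.Nodup)
    (h2 : ∀ x ∈ L, Subtree t₀ x) : L.length ≤ hreg.toFinset.card := by
  rw [← List.toFinset_card_of_nodup h1]
  apply Finset.card_le_card
  intro x hx
  exact (Set.Finite.mem_toFinset (hs := hreg)).mpr (h2 x (List.mem_toFinset.mp hx))

/-- The representation of the subtree `q` as a μ-type, relative to the
binding stack `L`. -/
noncomputable def rep (hreg : Regular t₀) (hgu : Guarded t₀) (i : RepIn t₀) : MuTy :=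
  if hmem : i.q ∈ i.L then .var (i.L.idxOf i.q)
  else
    match hd : PFunctor.M.dest i.q with
    | ⟨TyHead.var n, _⟩ => .var (n + i.L.length)
    | ⟨TyHead.nat, _⟩ => .mu (.var 0)
    | ⟨TyHead.prod, _⟩ => .mu (.var 0)
    | ⟨TyHead.bullet, f⟩ =>
        .mu (.bullet (rep hreg hgu
          ⟨i.q :: i.L, f (), List.nodup_cons.mpr ⟨hmem, i.nodup⟩,
           fun x hx => (List.mem_cons.mp hx).elim (fun h => h ▸ i.subq) (i.subL x),
           i.subq.tail (child_of_dest hd ())⟩))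
    | ⟨TyHead.arrow, f⟩ =>
        .arrow
          (rep hreg hgu ⟨i.L, f false, i.nodup, i.subL, i.subq.tail (child_of_dest hd false)⟩)
          (rep hreg hgu ⟨i.L, f true, i.nodup, i.subL, i.subq.tail (child_of_dest hd true)⟩)
termination_by (hreg.toFinset.card + 1 - i.L.length, i.q)
decreasing_by
  · apply Prod.Lex.left
    have := length_le_card hreg i.nodup i.subL
    simp only [List.length_cons]
    omega
  · apply Prod.Lex.right
    exact ⟨guarded_subtree hgu i.subq, by rw [hd], child_of_dest hd false⟩
  · apply Prod.Lex.right
    exact ⟨guarded_subtree hgu i.subq, by rw [hd], child_of_dest hd true⟩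

end Representation
section Representation2

variable {t₀ : PseudoType}

noncomputable local instance : DecidableEq PseudoType := fun _ _ => Classical.propDecidable _

/-- The closing substitution for the binding stack `L`. -/
noncomputable def sigmaSub (hreg : Regular t₀) (hgu : Guarded t₀) :
    (L : List PseudoType) → L.Nodup → (∀ x ∈ L, Subtree t₀ x) → ℕ → MuTy
  | [], _, _, n => .var n
  | q :: L, hL, hS, 0 =>
      msubst
        (sigmaSub hreg hgu L (List.nodup_cons.mp hL).2
          (fun x hx => hS x (List.mem_cons_of_mem q hx)))
        (rep hreg hgu ⟨L, q, (List.nodup_cons.mp hL).2,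
          (fun x hx => hS x (List.mem_cons_of_mem q hx)), hS q List.mem_cons_self⟩)
  | q :: L, hL, hS, n+1 =>
      sigmaSub hreg hgu L (List.nodup_cons.mp hL).2
        (fun x hx => hS x (List.mem_cons_of_mem q hx)) n

/-- The closed μ-type representing `i.q`. -/
noncomputable def clo (hreg : Regular t₀) (hgu : Guarded t₀) (i : RepIn t₀) : MuTy :=
  msubst (sigmaSub hreg hgu i.L i.nodup i.subL) (rep hreg hgu i)

lemma repIn_eq {i j : RepIn t₀} (h1 : i.L = j.L) (h2 : i.q = j.q) : i = j := by
  cases i; cases j; cases h1; cases h2; rfl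

lemma sigma_ge (hreg : Regular t₀) (hgu : Guarded t₀) :
    ∀ (L : List PseudoType) hL hS (n : ℕ),
      sigmaSub hreg hgu L hL hS (n + L.length) = .var n := by
  intro L
  induction L with
  | nil => intro hL hS n; simp [sigmaSub]
  | cons q L ih =>
    intro hL hS n
    have : n + (q :: L).length = (n + L.length) + 1 := by simp; omega
    rw [this]
    exact ih _ _ n

lemma sigma_get (hreg : Regular t₀) (hgu : Guarded t₀) :
    ∀ (L : List PseudoType) hL hS (n : ℕ) (h : n < L.length),
      sigmaSub hreg hgu L hL hS n =
        clo hreg hgu ⟨L.drop (n+1), L.get ⟨n, h⟩,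
          hL.sublist (List.drop_sublist (n+1) L),
          fun x hx => hS x (List.mem_of_mem_drop hx),
          hS _ (List.get_mem L ⟨n, h⟩)⟩ := by
  intro L
  induction L with
  | nil => intro hL hS n h; exact absurd h (by simp)
  | cons q L ih =>
    intro hL hS n h
    cases n with
    | zero =>
      show msubst _ _ = msubst _ _
      rfl
    | succ n =>
      show sigmaSub hreg hgu L _ _ n = _
      rw [ih _ _ n (by simpa using h)]
      apply congrArg
      apply repIn_eq <;> rfl

end Representation2
section Representation3

variable {t₀ : PseudoType}

noncomputable local instance : DecidableEq PseudoType := fun _ _ => Classical.propDecidable _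

lemma rep_mem (hreg : Regular t₀) (hgu : Guarded t₀) (i : RepIn t₀) (h : i.q ∈ i.L) :
    rep hreg hgu i = .var (i.L.idxOf i.q) := by
  rw [rep]
  exact dif_pos h

lemma rep_var (hreg : Regular t₀) (hgu : Guarded t₀) (i : RepIn t₀) (hmem : i.q ∉ i.L)
    {n : ℕ} {f} (hd : PFunctor.M.dest i.q = ⟨TyHead.var n, f⟩) :
    rep hreg hgu i = .var (n + i.L.length) := by
  rw [rep, dif_neg hmem]
  split
  all_goals rename_i f' heq
  all_goals rw [hd] at heq
  · injection heq with h1 h2; injection h1 with h1; rw [h1]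
  all_goals injection heq with h1 h2; try cases h1
end Representation3

section Representation4

variable {t₀ : PseudoType}

noncomputable local instance : DecidableEq PseudoType := fun _ _ => Classical.propDecidable _

lemma rep_natlike (hreg : Regular t₀) (hgu : Guarded t₀) (i : RepIn t₀) (hmem : i.q ∉ i.L)
    {h : TyHead} {f} (hd : PFunctor.M.dest i.q = ⟨h, f⟩)
    (hh : h = TyHead.nat ∨ h = TyHead.prod) :
    rep hreg hgu i = .mu (.var 0) := by
  rw [rep, dif_neg hmem]
  split
  all_goals rename_i f' heq
  all_goals rw [hd] at heq
  all_goals injection heq with h1 h2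
  all_goals first
    | rfl
    | (cases h1; rcases hh with h | h <;> cases h)

lemma rep_bullet (hreg : Regular t₀) (hgu : Guarded t₀) (i j : RepIn t₀) (hmem : i.q ∉ i.L)
    {f} (hd : PFunctor.M.dest i.q = ⟨TyHead.bullet, f⟩)
    (hL : j.L = i.q :: i.L) (hq : j.q = f ()) :
    rep hreg hgu i = .mu (.bullet (rep hreg hgu j)) := by
  rw [rep, dif_neg hmem]
  split
  all_goals rename_i f' heq
  all_goals rw [hd] at heq
  all_goals injection heq with h1 h2
  all_goals try cases h1
  cases h2
  exact congrArg (fun x => MuTy.mu (MuTy.bullet (rep hreg hgu x))) (repIn_eq (by rw [hL]) (by rw [hq]))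

lemma rep_arrow (hreg : Regular t₀) (hgu : Guarded t₀) (i j₁ j₂ : RepIn t₀)
    (hmem : i.q ∉ i.L) {f} (hd : PFunctor.M.dest i.q = ⟨TyHead.arrow, f⟩)
    (hL₁ : j₁.L = i.L) (hq₁ : j₁.q = f false) (hL₂ : j₂.L = i.L) (hq₂ : j₂.q = f true) :
    rep hreg hgu i = .arrow (rep hreg hgu j₁) (rep hreg hgu j₂) := by
  rw [rep, dif_neg hmem]
  split
  all_goals rename_i f' heq
  all_goals rw [hd] at heq
  all_goals injection heq with h1 h2
  all_goals try cases h1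
  cases h2
  congr 1
  · exact congrArg (rep hreg hgu) (repIn_eq (by rw [hL₁]) (by rw [hq₁]))
  · exact congrArg (rep hreg hgu) (repIn_eq (by rw [hL₂]) (by rw [hq₂]))

lemma get_not_mem_drop : ∀ (L : List PseudoType) (hL : L.Nodup) (n : ℕ) (h : n < L.length),
    L.get ⟨n, h⟩ ∉ L.drop (n+1) := by
  intro L
  induction L with
  | nil => intro hL n h; simp at h
  | cons q L ih =>
    intro hL n h
    cases n with
    | zero => exact (List.nodup_cons.mp hL).1
    | succ n => exact ih (List.nodup_cons.mp hL).2 n (by simpa using h)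

lemma clo_mem (hreg : Regular t₀) (hgu : Guarded t₀) (i : RepIn t₀) (hmem : i.q ∈ i.L) :
    ∃ j : RepIn t₀, j.q = i.q ∧ j.q ∉ j.L ∧ clo hreg hgu i = clo hreg hgu j := by
  have hlt : i.L.idxOf i.q < i.L.length := List.idxOf_lt_length_iff.mpr hmem
  have hget : i.L.get ⟨i.L.idxOf i.q, hlt⟩ = i.q := by rw [List.get_eq_getElem]; exact List.getElem_idxOf hlt
  refine ⟨⟨i.L.drop (i.L.idxOf i.q + 1), i.L.get ⟨i.L.idxOf i.q, hlt⟩,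
    i.nodup.sublist (List.drop_sublist _ _),
    fun x hx => i.subL x (List.mem_of_mem_drop hx),
    i.subL _ (List.get_mem i.L ⟨_, hlt⟩)⟩, hget, ?_, ?_⟩
  · exact get_not_mem_drop i.L i.nodup _ hlt
  · show msubst _ _ = _
    rw [rep_mem hreg hgu i hmem]
    show sigmaSub hreg hgu i.L i.nodup i.subL (i.L.idxOf i.q) = _
    rw [sigma_get hreg hgu i.L i.nodup i.subL _ hlt]

lemma clo_var (hreg : Regular t₀) (hgu : Guarded t₀) (i : RepIn t₀) (hmem : i.q ∉ i.L)
    {n : ℕ} {f} (hd : PFunctor.M.dest i.q = ⟨TyHead.var n, f⟩) :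
    clo hreg hgu i = .var n := by
  show msubst _ _ = _
  rw [rep_var hreg hgu i hmem hd]
  show sigmaSub hreg hgu i.L i.nodup i.subL (n + i.L.length) = _
  rw [sigma_ge hreg hgu i.L i.nodup i.subL n]

lemma clo_natlike (hreg : Regular t₀) (hgu : Guarded t₀) (i : RepIn t₀) (hmem : i.q ∉ i.L)
    {h : TyHead} {f} (hd : PFunctor.M.dest i.q = ⟨h, f⟩)
    (hh : h = TyHead.nat ∨ h = TyHead.prod) :
    clo hreg hgu i = .mu (.var 0) := by
  show msubst _ _ = _
  rw [rep_natlike hreg hgu i hmem hd hh]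
  rfl

lemma sigma_cons (hreg : Regular t₀) (hgu : Guarded t₀) (i j : RepIn t₀)
    (hL : j.L = i.q :: i.L) :
    ∀ (n : ℕ), sigmaSub hreg hgu j.L j.nodup j.subL n
      = consSub (clo hreg hgu i) (sigmaSub hreg hgu i.L i.nodup i.subL) n := by
  intro n
  rcases j with ⟨L', q', h1, h2, h3⟩
  simp only at hL
  subst hL
  cases n with
  | zero =>
    show msubst _ _ = clo hreg hgu i
    show _ = msubst _ _
    congr 1
  | succ n => rfl

lemma clo_bullet (hreg : Regular t₀) (hgu : Guarded t₀) (i j : RepIn t₀) (hmem : i.q ∉ i.L)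
    {f} (hd : PFunctor.M.dest i.q = ⟨TyHead.bullet, f⟩)
    (hL : j.L = i.q :: i.L) (hq : j.q = f ()) :
    treeOfMu (clo hreg hgu i) = tbullet (treeOfMu (clo hreg hgu j)) := by
  have hrep := rep_bullet hreg hgu i j hmem hd hL hq
  have hclo : clo hreg hgu i = .mu (.bullet (msubst (mlift (sigmaSub hreg hgu i.L i.nodup i.subL)) (rep hreg hgu j))) := by
    show msubst _ _ = _
    rw [hrep]
    rfl
  have hsub : substMu (clo hreg hgu i) 0
      (.bullet (msubst (mlift (sigmaSub hreg hgu i.L i.nodup i.subL)) (rep hreg hgu j)))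
      = .bullet (msubst (consSub (clo hreg hgu i) (sigmaSub hreg hgu i.L i.nodup i.subL)) (rep hreg hgu j)) := by
    show MuTy.bullet _ = _
    rw [subst0_msubst]
  have hcloj : msubst (consSub (clo hreg hgu i) (sigmaSub hreg hgu i.L i.nodup i.subL)) (rep hreg hgu j) = clo hreg hgu j := by
    refine (msubst_congr _ (fun n => (sigma_cons hreg hgu i j hL n).symm)).symm ▸ rfl
  have hmain := tree_mu_unfold (T := .bullet (msubst (mlift (sigmaSub hreg hgu i.L i.nodup i.subL)) (rep hreg hgu j))) ⟨_, NfRel.bullet _⟩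
  rw [← hclo] at hmain
  rw [hsub, hcloj, tree_bullet] at hmain
  exact hmain

lemma clo_arrow (hreg : Regular t₀) (hgu : Guarded t₀) (i j₁ j₂ : RepIn t₀)
    (hmem : i.q ∉ i.L) {f} (hd : PFunctor.M.dest i.q = ⟨TyHead.arrow, f⟩)
    (hL₁ : j₁.L = i.L) (hq₁ : j₁.q = f false) (hL₂ : j₂.L = i.L) (hq₂ : j₂.q = f true) :
    clo hreg hgu i = .arrow (clo hreg hgu j₁) (clo hreg hgu j₂) := by
  show msubst _ _ = _
  rw [rep_arrow hreg hgu i j₁ j₂ hmem hd hL₁ hq₁ hL₂ hq₂]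
  show MuTy.arrow _ _ = _
  rcases j₁ with ⟨L₁, q₁, a1, a2, a3⟩
  rcases j₂ with ⟨L₂, q₂, b1, b2, b3⟩
  simp only at hL₁ hL₂
  subst hL₁; subst hL₂
  rfl

end Representation4
section Representation5

variable {t₀ : PseudoType}

lemma canon_dest_of (q : PseudoType) {h : TyHead} {f} (hd : PFunctor.M.dest q = ⟨h, f⟩)
    (hh : h ≠ TyHead.prod) :
    PFunctor.M.dest (canon q) = ⟨h, fun b => canon (f b)⟩ := by
  rw [canon_dest, canonGen, hd]
  cases h
  case prod => exact absurd rfl hh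
  all_goals rfl

lemma canon_dest_prod (q : PseudoType) {f} (hd : PFunctor.M.dest q = ⟨TyHead.prod, f⟩) :
    PFunctor.M.dest (canon q) = ⟨TyHead.nat, Empty.elim⟩ := by
  rw [canon_dest, canonGen, hd]
  show (⟨TyHead.nat, canon ∘ Empty.elim⟩ : TyP.Obj PseudoType) = _
  congr 1
  funext b
  exact b.elim

lemma clo_step (hreg : Regular t₀) (hgu : Guarded t₀) (i : RepIn t₀) (hmem : i.q ∉ i.L) :
    ∃ (a : TyHead) (ff gg : tyArity a → PseudoType),
      PFunctor.M.dest (treeOfMu (clo hreg hgu i)) = ⟨a, ff⟩ ∧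
      PFunctor.M.dest (canon i.q) = ⟨a, gg⟩ ∧
      ∀ b, ∃ j : RepIn t₀, ff b = treeOfMu (clo hreg hgu j) ∧ gg b = canon j.q := by
  rcases hd : PFunctor.M.dest i.q with ⟨h, f⟩
  cases h with
  | var n =>
    refine ⟨TyHead.var n, Empty.elim, fun b => canon (f b), ?_, canon_dest_of i.q hd (by simp), fun b => b.elim⟩
    rw [clo_var hreg hgu i hmem hd, tree_var, tvar_dest]
  | nat =>
    refine ⟨TyHead.nat, Empty.elim, fun b => canon (f b), ?_, canon_dest_of i.q hd (by simp), fun b => b.elim⟩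
    rw [clo_natlike hreg hgu i hmem hd (Or.inl rfl), tree_munat, tnat_dest]
  | prod =>
    refine ⟨TyHead.nat, Empty.elim, Empty.elim, ?_, canon_dest_prod i.q hd, fun b => b.elim⟩
    rw [clo_natlike hreg hgu i hmem hd (Or.inr rfl), tree_munat, tnat_dest]
  | bullet =>
    refine ⟨TyHead.bullet, ?_, fun b => canon (f b), ?_, canon_dest_of i.q hd (by simp), ?_⟩
    · exact fun _ => treeOfMu (clo hreg hgu
        ⟨i.q :: i.L, f (), List.nodup_cons.mpr ⟨hmem, i.nodup⟩,
          fun x hx => (List.mem_cons.mp hx).elim (fun h => h ▸ i.subq) (i.subL x),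
          i.subq.tail (child_of_dest hd ())⟩)
    · rw [clo_bullet hreg hgu i
          ⟨i.q :: i.L, f (), List.nodup_cons.mpr ⟨hmem, i.nodup⟩,
            fun x hx => (List.mem_cons.mp hx).elim (fun h => h ▸ i.subq) (i.subL x),
            i.subq.tail (child_of_dest hd ())⟩ hmem hd rfl rfl, tbullet_dest]
      rfl
    · intro b
      cases b
      exact ⟨_, rfl, rfl⟩
  | arrow =>
    refine ⟨TyHead.arrow, ?_, fun b => canon (f b), ?_, canon_dest_of i.q hd (by simp), ?_⟩
    · exact fun b => bif b
        then treeOfMu (clo hreg hgu ⟨i.L, f true, i.nodup, i.subL, i.subq.tail (child_of_dest hd true)⟩)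
        else treeOfMu (clo hreg hgu ⟨i.L, f false, i.nodup, i.subL, i.subq.tail (child_of_dest hd false)⟩)
    · rw [clo_arrow hreg hgu i
          ⟨i.L, f false, i.nodup, i.subL, i.subq.tail (child_of_dest hd false)⟩
          ⟨i.L, f true, i.nodup, i.subL, i.subq.tail (child_of_dest hd true)⟩
          hmem hd rfl rfl rfl rfl, tree_arrow, tarrow_dest]
      rfl
    · intro b
      cases b
      · exact ⟨_, rfl, rfl⟩
      · exact ⟨_, rfl, rfl⟩

lemma clo_canon (hreg : Regular t₀) (hgu : Guarded t₀) (i : RepIn t₀) :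
    treeOfMu (clo hreg hgu i) = canon i.q := by
  apply PFunctor.M.bisim
    (fun x y => ∃ i : RepIn t₀, x = treeOfMu (clo hreg hgu i) ∧ y = canon i.q)
  · rintro x y ⟨i, rfl, rfl⟩
    by_cases hmem : i.q ∈ i.L
    · obtain ⟨j, hq, hnot, hclo⟩ := clo_mem hreg hgu i hmem
      obtain ⟨a, ff, gg, h1, h2, h3⟩ := clo_step hreg hgu j hnot
      rw [hclo, ← hq]
      exact ⟨a, ff, gg, h1, h2, fun b => h3 b⟩
    · obtain ⟨a, ff, gg, h1, h2, h3⟩ := clo_step hreg hgu i hmem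
      exact ⟨a, ff, gg, h1, h2, h3⟩
  · exact ⟨i, rfl, rfl⟩

/-- Representation theorem: the collapse of a regular guarded pseudo-type is
the tree of a μ-type. -/
theorem exists_rep {t : PseudoType} (ht : IsType t) :
    ∃ S : MuTy, treeOfMu S = canon t :=
  ⟨clo ht.1 ht.2 ⟨[], t, List.nodup_nil, by simp, Relation.ReflTransGen.refl⟩,
    clo_canon ht.1 ht.2 _⟩

end Representation5
section Sloppy

/-- The replacement relation used in the embedding: `SloppyP t u` holds when
`u` is a μ-representable replacement of the derivation type `t`, which must
agree with the canonical collapse `canon t` whenever `t` is a genuine type. -/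
inductive SloppyP : PseudoType → PseudoType → Prop
  | canonR {t} : IsType t → SloppyP t (canon t)
  | image (S : MuTy) : SloppyP (treeOfMu S) (treeOfMu S)
  | bullet {a b} : SloppyP a b → SloppyP (tbullet a) (tbullet b)
  | arrow {a b a' b'} : (IsType a → SloppyP a a') → SloppyP b b' →
      SloppyP (tarrow a b) (tarrow a' b')

lemma sloppy_canon {t u : PseudoType} (h : SloppyP t u) (ht : IsType t) : u = canon t := by
  induction h with
  | canonR => rfl
  | image S => exact (canon_tree S).symm
  | bullet h ih => rw [canon_bullet, ih (isType_bullet ht)]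
  | @arrow a b a' b' h1 h2 ih1 ih2 =>
    rw [canon_arrow, ih1 (isType_arrow ht).1 (isType_arrow ht).1, ih2 (isType_arrow ht).2]

lemma head_eq_of_eq {x y : PseudoType} (h : x = y) :
    (PFunctor.M.dest x).1 = (PFunctor.M.dest y).1 := by rw [h]

lemma sloppy_bullet_inv' {t u a : PseudoType} (h : SloppyP t u) (he : t = tbullet a) :
    ∃ b, u = tbullet b ∧ SloppyP a b := by
  cases h with
  | canonR ht =>
    subst he
    exact ⟨canon a, canon_bullet a, SloppyP.canonR (isType_bullet ht)⟩
  | image S =>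
    obtain ⟨S', hS'⟩ := tree_head_bullet he
    exact ⟨a, he, by rw [← hS']; exact SloppyP.image S'⟩
  | bullet h =>
    have := tbullet_inj he
    subst this
    exact ⟨_, rfl, h⟩
  | arrow h1 h2 =>
    have := head_eq_of_eq he
    rw [tarrow_dest, tbullet_dest] at this
    cases this

lemma sloppy_bullet_inv {u a : PseudoType} (h : SloppyP (tbullet a) u) :
    ∃ b, u = tbullet b ∧ SloppyP a b :=
  sloppy_bullet_inv' h rfl

lemma sloppy_arrow_inv' {t u a b : PseudoType} (h : SloppyP t u) (he : t = tarrow a b) :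
    ∃ u₁ u₂, u = tarrow u₁ u₂ ∧ (IsType a → SloppyP a u₁) ∧ SloppyP b u₂ := by
  cases h with
  | canonR ht =>
    subst he
    exact ⟨canon a, canon b, canon_arrow a b, fun ha => SloppyP.canonR ha,
      SloppyP.canonR (isType_arrow ht).2⟩
  | image S =>
    obtain ⟨A, B, hA, hB⟩ := tree_head_arrow he
    exact ⟨a, b, he, fun _ => by rw [← hA]; exact SloppyP.image A,
      by rw [← hB]; exact SloppyP.image B⟩
  | bullet h =>
    have := head_eq_of_eq he
    rw [tbullet_dest, tarrow_dest] at this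
    cases this
  | arrow h1 h2 =>
    obtain ⟨e1, e2⟩ := tarrow_inj he
    subst e1; subst e2
    exact ⟨_, _, rfl, h1, h2⟩

lemma sloppy_arrow_inv {u a b : PseudoType} (h : SloppyP (tarrow a b) u) :
    ∃ u₁ u₂, u = tarrow u₁ u₂ ∧ (IsType a → SloppyP a u₁) ∧ SloppyP b u₂ :=
  sloppy_arrow_inv' h rfl

lemma sloppy_bulletN_inv {n : ℕ} {a u : PseudoType} (h : SloppyP (tbulletN n a) u) :
    ∃ w, u = tbulletN n w ∧ SloppyP a w := by
  induction n generalizing u with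
  | zero => exact ⟨u, rfl, h⟩
  | succ n ih =>
    rw [tbulletN_succ] at h
    obtain ⟨b, hb, hsb⟩ := sloppy_bullet_inv h
    obtain ⟨w, hw, hsw⟩ := ih hsb
    exact ⟨w, by rw [hb, hw, tbulletN_succ], hsw⟩

lemma sloppy_bulletN {n : ℕ} {a b : PseudoType} (h : SloppyP a b) :
    SloppyP (tbulletN n a) (tbulletN n b) := by
  induction n with
  | zero => exact h
  | succ n ih => rw [tbulletN_succ, tbulletN_succ]; exact ih.bullet

end Sloppy

section NakHelpers

lemma nak_equiv {Γ : NakCtx} {e : Expr} {T T' : MuTy} (h : NakTypes Γ e T)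
    (he : treeOfMu T = treeOfMu T') : NakTypes Γ e T' :=
  h.sub (NakSub.equiv (show MuEquiv T T' from he))

lemma nak_subStar {Γ : NakCtx} {e : Expr} {T T' : MuTy}
    (h : Relation.ReflTransGen (NakSub 0) T T') (hN : NakTypes Γ e T) :
    NakTypes Γ e T' := by
  induction h with
  | refl => exact hN
  | tail _ hstep ih => exact ih.sub hstep

lemma subStar_bullet {T T' : MuTy} (h : Relation.ReflTransGen (NakSub 0) T T') :
    Relation.ReflTransGen (NakSub 0) (.bullet T) (.bullet T') :=
  Relation.ReflTransGen.lift MuTy.bullet (fun _ _ hs => NakSub.bullet hs) _ _ h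

lemma arrow_bulletN_substar (n : ℕ) (A B : MuTy) :
    Relation.ReflTransGen (NakSub 0)
      (.arrow (muBulletN n A) (muBulletN n B)) (muBulletN n (.arrow A B)) := by
  induction n with
  | zero => exact .refl
  | succ n ih =>
    rw [muBulletN_succ, muBulletN_succ, muBulletN_succ]
    exact Relation.ReflTransGen.head (NakSub.bulletArrow 0 _ _) (subStar_bullet ih)

/-- Context invariant for the main induction. -/
def CtxInv (Γ' : Ctx) (Γ : NakCtx) : Prop :=
  ∀ x t', Γ' x = some t' → ∃ S, Γ x = some S ∧ (IsType t' → treeOfMu S = canon t')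

lemma ctxInv_cons {Γ' : Ctx} {Γ : NakCtx} {t' : PseudoType} {S : MuTy}
    (h : CtxInv Γ' Γ) (hc : IsType t' → treeOfMu S = canon t') :
    CtxInv (Ctx.cons t' Γ') (NakCtx.cons S Γ) := by
  intro x u hx
  cases x with
  | zero =>
    cases hx
    exact ⟨S, rfl, hc⟩
  | succ m => exact h m u hx

end NakHelpers
section MainProof

theorem embed_main {Γ' : Ctx} {e : Expr} {t : PseudoType} (h : TypesNC Γ' e t) :
    ∀ Γ : NakCtx, CtxInv Γ' Γ →
      (∀ T : MuTy, SloppyP t (treeOfMu T) → NakTypes Γ e T) ∧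
      (∃ T : MuTy, SloppyP t (treeOfMu T) ∧ NakTypes Γ e T) := by
  induction h with
  | @ax Γ' x t hx ht =>
    intro Γ hInv
    obtain ⟨S, hS, hcan⟩ := hInv x t hx
    have hcanS : treeOfMu S = canon t := hcan ht
    constructor
    · intro T hT
      exact nak_equiv (NakTypes.ax hS) (by rw [hcanS, sloppy_canon hT ht])
    · refine ⟨S, ?_, NakTypes.ax hS⟩
      rw [hcanS]
      exact SloppyP.canonR ht
  | @bulletI Γ' e t h ih =>
    intro Γ hInv
    obtain ⟨ihU, ihE⟩ := ih Γ hInv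
    constructor
    · intro T hT
      obtain ⟨b, hb, hsb⟩ := sloppy_bullet_inv hT
      obtain ⟨S', hS'⟩ := tree_head_bullet hb
      have h1 : NakTypes Γ e S' := ihU S' (by rw [hS']; exact hsb)
      exact nak_equiv (h1.sub (NakSub.delay 0 S')) (by rw [tree_bullet, hS', ← hb])
    · obtain ⟨T, hT, hN⟩ := ihE
      refine ⟨.bullet T, ?_, hN.sub (NakSub.delay 0 T)⟩
      rw [tree_bullet]
      exact SloppyP.bullet hT
  | @arrowI Γ' e n t s h ih =>
    intro Γ hInv
    constructor
    · intro T hT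
      obtain ⟨w, hw, hsw⟩ := sloppy_bulletN_inv hT
      obtain ⟨u₁, u₂, hu, hD, hS⟩ := sloppy_arrow_inv hsw
      rw [hu] at hw
      obtain ⟨W, hW, hTW⟩ := tree_head_bulletN hw
      obtain ⟨A, B, hA, hB⟩ := tree_head_arrow hW
      have hc : IsType (tbulletN n t) → treeOfMu (muBulletN n A) = canon (tbulletN n t) := by
        intro hIT
        have hit : IsType t := isType_bulletN hIT
        rw [tree_muBulletN, hA, canon_bulletN, sloppy_canon (hD hit) hit]
      have ihU := (ih (NakCtx.cons (muBulletN n A) Γ) (ctxInv_cons hInv hc)).1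
      have hbody : NakTypes (NakCtx.cons (muBulletN n A) Γ) e (muBulletN n B) := by
        apply ihU
        rw [tree_muBulletN, hB]
        exact sloppy_bulletN hS
      have hlam := NakTypes.arrowI hbody
      have hlam2 := nak_subStar (arrow_bulletN_substar n A B) hlam
      apply nak_equiv hlam2
      rw [tree_muBulletN, tree_arrow, hA, hB, ← hw]
    · obtain ⟨S₀, hS₀⟩ : ∃ S₀ : MuTy, IsType t → treeOfMu S₀ = canon t := by
        by_cases hit : IsType t
        · obtain ⟨S₀, hS₀⟩ := exists_rep hit
          exact ⟨S₀, fun _ => hS₀⟩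
        · exact ⟨.var 0, fun hit' => absurd hit' hit⟩
      have hc : IsType (tbulletN n t) → treeOfMu (muBulletN n S₀) = canon (tbulletN n t) := by
        intro hIT
        rw [tree_muBulletN, hS₀ (isType_bulletN hIT), canon_bulletN]
      obtain ⟨T_s, hTs, hN⟩ := (ih (NakCtx.cons (muBulletN n S₀) Γ) (ctxInv_cons hInv hc)).2
      obtain ⟨v, hv, hsv⟩ := sloppy_bulletN_inv hTs
      obtain ⟨B, hB, hTB⟩ := tree_head_bulletN hv
      have hbody : NakTypes (NakCtx.cons (muBulletN n S₀) Γ) e (muBulletN n B) :=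
        nak_equiv hN (by rw [← hTB, hv])
      have hlam := NakTypes.arrowI hbody
      have hlam2 := nak_subStar (arrow_bulletN_substar n S₀ B) hlam
      refine ⟨muBulletN n (.arrow S₀ B), ?_, hlam2⟩
      rw [tree_muBulletN, tree_arrow, hB]
      apply sloppy_bulletN
      exact SloppyP.arrow (fun ha => by rw [hS₀ ha]; exact SloppyP.canonR ha) hsv
  | @arrowE Γ' e₁ e₂ n t s h1 h2 ih1 ih2 =>
    intro Γ hInv
    obtain ⟨ihU1, ihE1⟩ := ih1 Γ hInv
    obtain ⟨ihU2, ihE2⟩ := ih2 Γ hInv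
    obtain ⟨T₂, hT₂, hN₂⟩ := ihE2
    obtain ⟨w₁, hw₁, hsw₁⟩ := sloppy_bulletN_inv hT₂
    obtain ⟨A, hA, hTA⟩ := tree_head_bulletN hw₁
    have hN₂' : NakTypes Γ e₂ (muBulletN n A) := nak_equiv hN₂ (by rw [← hTA, hw₁])
    have key : ∀ B : MuTy, SloppyP s (treeOfMu B) →
        NakTypes Γ (Expr.app e₁ e₂) (muBulletN n B) := by
      intro B hsB
      have hN₁ : NakTypes Γ e₁ (muBulletN n (.arrow A B)) := by
        apply ihU1
        rw [tree_muBulletN, tree_arrow]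
        apply sloppy_bulletN
        exact SloppyP.arrow (fun ha => by rw [hA]; exact hsw₁) hsB
      exact NakTypes.arrowE hN₁ hN₂'
    constructor
    · intro T hT
      obtain ⟨v, hv, hsv⟩ := sloppy_bulletN_inv hT
      obtain ⟨B, hB, hTB⟩ := tree_head_bulletN hv
      have := key B (by rw [hB]; exact hsv)
      exact nak_equiv this (by rw [← hTB, hv])
    · obtain ⟨T₁, hT₁, hN₁⟩ := ihE1
      obtain ⟨w, hw, hsw⟩ := sloppy_bulletN_inv hT₁
      obtain ⟨u₁, u₂, hu, hD, hS⟩ := sloppy_arrow_inv hsw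
      rw [hu] at hw
      obtain ⟨W, hW, hTW⟩ := tree_head_bulletN hw
      obtain ⟨A', B', hA', hB'⟩ := tree_head_arrow hW
      refine ⟨muBulletN n B', ?_, key B' (by rw [hB']; exact hS)⟩
      rw [tree_muBulletN, hB']
      exact sloppy_bulletN hS
  
end MainProof
/-- Embedding λ•→ into λNak: if `tree(Γ) ⊢ e : tree(T)` is
derivable in λ•→ without using rule (const), then `Γ ⊢ e : T` is derivable
in λNak. -/
theorem nakano_embedding (Γ : NakCtx) (e : Expr) (T : MuTy)
    (hΓ : ∀ x S, Γ x = some S → MuGuarded S) (hT : MuGuarded T)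
    (h : TypesNC (fun x => (Γ x).map treeOfMu) e (treeOfMu T)) :
    NakTypes Γ e T := by
  have hInv : CtxInv (fun x => (Γ x).map treeOfMu) Γ := by
    intro x t' hx
    cases hΓx : Γ x with
    | none => simp [hΓx] at hx
    | some S =>
      simp only [hΓx, Option.map_some] at hx
      cases hx
      exact ⟨S, rfl, fun _ => (canon_tree S).symm⟩
  exact (embed_main h Γ hInv).1 T (SloppyP.image T)

end LambdaBullet
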